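/- Uniqueness of solutions of a one-sided Lipschitz differential inclusion: let F : ℝ → Set ℝ satisfy (z₁ − z₂)·(w₁ − w₂) ≤ 0 for all reals w₁, w₂ and all z₁ ∈ F(w₁), z₂ ∈ F(w₂). Suppose y₁, y₂ : ℝ → ℝ are locally Lipschitz on [0,∞), y₁(0) = y₂(0), and for almost every t ≥ 0 (with respect to Lebesgue measure) each yᵢ is differentiable at t with derivative lying in F(yᵢ(t)). Then y₁(t) = y₂(t) for all t ≥ 0. -/

import Mathlib

open MeasureTheory Set Filter
open scoped Topology NNReal

/-- A Lipschitz function on `[a,b]` whose derivative exists and is nonpositive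
off a null set is bounded by its value at `a`. -/
lemma key {f : ℝ → ℝ} {a b : ℝ} {L : ℝ≥0}
    (hf : LipschitzOnWith L f (Set.Icc a b)) {N : Set ℝ} (hN : volume N = 0)
    (hd : ∀ x ∈ Set.Ico a b, x ∉ N → ∃ d, d ≤ 0 ∧ HasDerivAt f d x) :
    ∀ x ∈ Set.Icc a b, f x ≤ f a := by
  have claim : ∀ ε : ℝ, 0 < ε → ∀ x ∈ Set.Icc a b, f x ≤ f a + ε * (x - a) + ε := by
    intro ε hε x hx
    have hab : a ≤ b := hx.1.trans hx.2
    set C : ℝ := 2 * (L : ℝ) + 1 with hC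
    have hCpos : 0 < C := by positivity
    have hεC : (0:ℝ) < ε / C := div_pos hε hCpos
    obtain ⟨U, hNU, hUopen, hU⟩ :
        ∃ U ⊇ N, IsOpen U ∧ volume U < ENNReal.ofReal (ε / C) := by
      apply Set.exists_isOpen_lt_of_lt
      rw [hN]
      exact ENNReal.ofReal_pos.2 hεC
    have hUfin : volume U ≠ ⊤ := (hU.trans_le le_top).ne
    set g : ℝ → ℝ := fun y => (volume (U ∩ Set.Ioc a y)).toReal with hg
    have gfin : ∀ y : ℝ, volume (U ∩ Set.Ioc a y) ≠ ⊤ := fun y =>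
      ((measure_mono Set.inter_subset_left).trans_lt (hU.trans_le le_top)).ne
    -- difference formula, assuming a ≤ x ≤ z
    have gdiff : ∀ p q : ℝ, a ≤ p → p ≤ q →
        g q - g p = (volume (U ∩ Set.Ioc p q)).toReal := by
      intro p q hap hpq
      have hsplit : U ∩ Set.Ioc a q = (U ∩ Set.Ioc a p) ∪ (U ∩ Set.Ioc p q) := by
        rw [← Set.inter_union_distrib_left, Set.Ioc_union_Ioc_eq_Ioc hap hpq]
      have hdisj : Disjoint (U ∩ Set.Ioc a p) (U ∩ Set.Ioc p q) :=
        (Set.Ioc_disjoint_Ioc_of_le le_rfl).mono Set.inter_subset_right Set.inter_subset_right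
      have hmeas : MeasurableSet (U ∩ Set.Ioc p q) :=
        hUopen.measurableSet.inter measurableSet_Ioc
      have hfin2 : volume (U ∩ Set.Ioc p q) ≠ ⊤ :=
        ((measure_mono Set.inter_subset_left).trans_lt (hU.trans_le le_top)).ne
      simp only [hg]
      rw [hsplit, measure_union hdisj hmeas, ENNReal.toReal_add (gfin p) hfin2]
      ring
    -- monotone and 1-Lipschitz bounds, for all p ≤ q
    have gmono : ∀ p q : ℝ, p ≤ q → g p ≤ g q := by
      intro p q hpq
      exact ENNReal.toReal_mono (gfin q)
        (measure_mono (Set.inter_subset_inter_right _ (Set.Ioc_subset_Ioc_right hpq)))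
    have glip : ∀ p q : ℝ, p ≤ q → g q - g p ≤ q - p := by
      intro p q hpq
      have hsub : U ∩ Set.Ioc a q ⊆ (U ∩ Set.Ioc a p) ∪ Set.Ioc p q := by
        rintro w ⟨hwU, hwa, hwq⟩
        rcases le_or_gt w p with h | h
        · exact Or.inl ⟨hwU, hwa, h⟩
        · exact Or.inr ⟨h, hwq⟩
      have : volume (U ∩ Set.Ioc a q) ≤ volume (U ∩ Set.Ioc a p) + volume (Set.Ioc p q) :=
        (measure_mono hsub).trans (measure_union_le _ _)
      have hIfin : volume (Set.Ioc p q) ≠ ⊤ := by simp [Real.volume_Ioc]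
      have := ENNReal.toReal_mono (by
        exact ENNReal.add_ne_top.2 ⟨gfin p, hIfin⟩) this
      rw [ENNReal.toReal_add (gfin p) hIfin] at this
      have hIoc : (volume (Set.Ioc p q)).toReal = q - p := by
        rw [Real.volume_Ioc, ENNReal.toReal_ofReal (by linarith)]
      simp only [hg] at this ⊢
      linarith [this, hIoc.le, hIoc.ge]
    have gcont : Continuous g := by
      refine (LipschitzWith.of_dist_le_mul (K := 1) fun p q => ?_).continuous
      rw [NNReal.coe_one, one_mul, Real.dist_eq, Real.dist_eq]
      rcases le_total p q with h | h
      · rw [abs_of_nonpos (by linarith [gmono p q h]), abs_of_nonpos (by linarith)]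
        linarith [glip p q h]
      · rw [abs_of_nonneg (by linarith [gmono q p h]), abs_of_nonneg (by linarith)]
        linarith [glip q p h]
    -- the perturbed function
    set h : ℝ → ℝ := fun y => f y - C * g y with hh
    have hcont : ContinuousOn h (Set.Icc a b) :=
      hf.continuousOn.sub ((gcont.continuousOn).const_smul C)
    -- fencing
    have fence : ∀ ⦃y⦄, y ∈ Set.Icc a b → h y ≤ h a + ε * (y - a) := by
      apply image_le_of_liminf_slope_right_lt_deriv_boundary' (f' := fun _ => (0:ℝ))
        (B := fun y => h a + ε * (y - a)) (B' := fun _ => ε) hcont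
      · -- slope estimate
        intro p hp r hr
        have hr' : (0:ℝ) < r := hr
        apply Filter.Eventually.frequently
        by_cases hpU : p ∈ U
        · -- bad point: inside U
          obtain ⟨δ, hδ, hball⟩ := Metric.isOpen_iff.1 hUopen p hpU
          filter_upwards [Ioo_mem_nhdsGT_of_mem (Set.left_mem_Ico.2 (lt_add_of_pos_right p hδ)),
            Ioc_mem_nhdsGT_of_mem (Set.left_mem_Ico.2 hp.2)] with z hz1 hz2
          have hpz : p < z := hz1.1
          have hzU : Set.Ioc p z ⊆ U := by
            intro w hw
            apply hball
            rw [Metric.mem_ball, Real.dist_eq, abs_of_pos (by linarith [hw.1])]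
            linarith [hw.2, hz1.2]
          have hgz : g z - g p = z - p := by
            rw [gdiff p z hp.1 hpz.le, Set.inter_eq_right.2 hzU, Real.volume_Ioc,
              ENNReal.toReal_ofReal (by linarith)]
          have hfz : f z - f p ≤ (L : ℝ) * (z - p) := by
            have := hf.dist_le_mul z ⟨hp.1.trans hpz.le, hz2.2⟩ p ⟨hp.1, hp.2.le⟩
            have habs : |z - p| = z - p := abs_of_pos (by linarith)
            rw [Real.dist_eq, Real.dist_eq, habs] at this
            calc f z - f p ≤ |f z - f p| := le_abs_self _
              _ ≤ (L:ℝ) * (z - p) := this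
          have : slope h p z = (f z - f p) / (z - p) - C * ((g z - g p) / (z - p)) := by
            rw [slope_def_field, hh]
            field_simp
            ring
          rw [this, hgz, div_self (by linarith : z - p ≠ 0)]
          have : (f z - f p) / (z - p) ≤ (L : ℝ) :=
            (div_le_iff₀ (by linarith)).2 (by linarith)
          calc (f z - f p) / (z - p) - C * 1 ≤ (L:ℝ) - C := by linarith
            _ < r := by rw [hC]; nlinarith [hr', L.coe_nonneg]
        · -- good point
          have hpN : p ∉ N := fun hc => hpU (hNU hc)
          obtain ⟨d, hd0, hder⟩ := hd p hp hpN
          have hslope : Tendsto (slope f p) (𝓝[>] p) (𝓝 d) :=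
            ((hasDerivAt_iff_tendsto_slope.1 hder).mono_left
              (nhdsWithin_mono p fun z hz => ne_of_gt hz))
          filter_upwards [hslope.eventually_lt_const (by linarith [hr'] : d < r),
            Ioc_mem_nhdsGT_of_mem (Set.left_mem_Ico.2 hp.2),
            self_mem_nhdsWithin] with z hz1 hz2 (hz3 : p < z)
          have : slope h p z = slope f p z - C * ((g z - g p) / (z - p)) := by
            rw [slope_def_field, slope_def_field, hh]
            field_simp
            ring
          rw [this]
          have hg0 : 0 ≤ (g z - g p) / (z - p) :=
            div_nonneg (by linarith [gmono p z hz3.le]) (by linarith)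
          nlinarith [hz1, hCpos]
      · simp
      · exact (continuous_const.add (continuous_const.mul (continuous_id.sub continuous_const))).continuousOn
      · intro p _
        simpa using (((hasDerivWithinAt_id p (Set.Ici p)).sub_const a).const_mul ε).const_add (h a)
      · intro _ _ _
        exact hε
    -- conclude
    have hga : g a = 0 := by simp [hg]
    have hgx : C * g x < ε := by
      have : g x ≤ (volume U).toReal :=
        ENNReal.toReal_mono hUfin (measure_mono Set.inter_subset_left)
      have h2 : (volume U).toReal < ε / C := by
        have := ENNReal.toReal_strict_mono (by simp) hU
        rwa [ENNReal.toReal_ofReal hεC.le] at this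
      calc C * g x ≤ C * (volume U).toReal := by nlinarith
        _ < C * (ε / C) := by nlinarith
        _ = ε := by field_simp
    have := fence hx
    simp only [hh, hga, mul_zero, sub_zero] at this
    linarith
  -- remove epsilon
  intro x hx
  by_contra hcon
  push_neg at hcon
  have hxa : 0 ≤ x - a := by linarith [hx.1]
  set ε := (f x - f a) / (x - a + 2) with hε
  have hεpos : 0 < ε := div_pos (by linarith) (by linarith)
  have := claim ε hεpos x hx
  have h2 : ε * (x - a + 2) = f x - f a := by
    rw [hε]; field_simp
  nlinarith

/-- uniqueness of solutions of a one-sided Lipschitz (with constant 0)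
differential inclusion `y' ∈ F(y)` on `[0,∞)`: two locally Lipschitz solutions with the
same initial value coincide on `[0,∞)`. -/
theorem di_osl_unique (F : ℝ → Set ℝ)
    (hF : ∀ w₁ w₂ z₁ z₂ : ℝ, z₁ ∈ F w₁ → z₂ ∈ F w₂ → (z₁ - z₂) * (w₁ - w₂) ≤ 0)
    (y₁ y₂ : ℝ → ℝ)
    (hy₁ : LocallyLipschitzOn (Set.Ici 0) y₁)
    (hy₂ : LocallyLipschitzOn (Set.Ici 0) y₂)
    (h0 : y₁ 0 = y₂ 0)
    (hd₁ : ∀ᵐ t ∂(volume.restrict (Set.Ici (0 : ℝ))), ∃ z ∈ F (y₁ t), HasDerivAt y₁ z t)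
    (hd₂ : ∀ᵐ t ∂(volume.restrict (Set.Ici (0 : ℝ))), ∃ z ∈ F (y₂ t), HasDerivAt y₂ z t) :
    ∀ t : ℝ, 0 ≤ t → y₁ t = y₂ t := by
  -- package the a.e. hypothesis into a null set
  set P : ℝ → Prop := fun s =>
    (s ∈ Set.Ici (0:ℝ) → ∃ z ∈ F (y₁ s), HasDerivAt y₁ z s) ∧
    (s ∈ Set.Ici (0:ℝ) → ∃ z ∈ F (y₂ s), HasDerivAt y₂ z s) with hP
  have hae : ∀ᵐ s ∂(volume : Measure ℝ), P s := by
    exact ((ae_restrict_iff' measurableSet_Ici).1 hd₁).and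
      ((ae_restrict_iff' measurableSet_Ici).1 hd₂)
  set N : Set ℝ := {s | ¬ P s} with hNdef
  have hN : volume N = 0 := ae_iff.1 hae
  intro t ht
  set S : Set ℝ := {x | y₁ x = y₂ x} with hS
  suffices hsub : Set.Icc 0 t ⊆ S by exact hsub ⟨ht, le_rfl⟩
  apply IsClosed.Icc_subset_of_forall_exists_gt
  · -- closedness
    have hc : ContinuousOn (fun x => y₁ x - y₂ x) (Set.Icc 0 t) :=
      ((hy₁.continuousOn).mono Set.Icc_subset_Ici_self).sub
        ((hy₂.continuousOn).mono Set.Icc_subset_Ici_self)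
    have := hc.preimage_isClosed_of_isClosed isClosed_Icc isClosed_singleton (t := ({0} : Set ℝ))
    convert this using 1
    ext w
    simp only [hS, Set.mem_inter_iff, Set.mem_setOf_eq, Set.mem_preimage,
      Set.mem_singleton_iff, sub_eq_zero]
    tauto
  · exact h0
  · -- local propagation
    rintro x ⟨(hxS : y₁ x = y₂ x), hx0, hxt⟩ y (hxy : x < y)
    obtain ⟨K₁, t₁, ht₁, hl₁⟩ := hy₁ hx0
    obtain ⟨K₂, t₂, ht₂, hl₂⟩ := hy₂ hx0
    obtain ⟨δ₁, hδ₁, hb₁⟩ := Metric.mem_nhdsWithin_iff.1 ht₁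
    obtain ⟨δ₂, hδ₂, hb₂⟩ := Metric.mem_nhdsWithin_iff.1 ht₂
    set δ : ℝ := min (δ₁ / 2) (δ₂ / 2) with hδdef
    have hδ : 0 < δ := lt_min (by linarith) (by linarith)
    set c : ℝ := min (x + δ) y with hcdef
    have hxc : x < c := lt_min (by linarith) hxy
    have hcy : c ≤ y := min_le_right _ _
    have hsub1 : Set.Icc x c ⊆ t₁ := by
      intro w hw
      apply hb₁
      constructor
      · rw [Metric.mem_ball, Real.dist_eq, abs_of_nonneg (by linarith [hw.1])]
        have : c ≤ x + δ := min_le_left _ _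
        have : δ ≤ δ₁ / 2 := min_le_left _ _
        linarith [hw.2, min_le_left (x + δ) y, min_le_left (δ₁/2) (δ₂/2)]
      · exact le_trans hx0 hw.1
    have hsub2 : Set.Icc x c ⊆ t₂ := by
      intro w hw
      apply hb₂
      constructor
      · rw [Metric.mem_ball, Real.dist_eq, abs_of_nonneg (by linarith [hw.1])]
        linarith [hw.2, min_le_left (x + δ) y, min_le_right (δ₁/2) (δ₂/2)]
      · exact le_trans hx0 hw.1
    set u : ℝ → ℝ := fun s => y₁ s - y₂ s with hu
    have hLu : LipschitzOnWith (K₁ + K₂) u (Set.Icc x c) :=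
      (hl₁.mono hsub1).sub (hl₂.mono hsub2)
    set M : ℝ := ((K₁ : ℝ) + K₂) * (c - x) with hM
    have hM0 : 0 ≤ M := mul_nonneg (by positivity) (by linarith)
    have hubound : ∀ s ∈ Set.Icc x c, |u s| ≤ M := by
      intro s hs
      have := hLu.dist_le_mul s hs x (Set.left_mem_Icc.2 hxc.le)
      rw [Real.dist_eq, Real.dist_eq] at this
      have hux : u x = 0 := by simp [hu, hxS]
      rw [hux, sub_zero] at this
      calc |u s| ≤ ((K₁ + K₂ : ℝ≥0) : ℝ) * |s - x| := this
        _ ≤ M := by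
          rw [hM, abs_of_nonneg (by linarith [hs.1])]
          push_cast
          nlinarith [hs.2, NNReal.coe_nonneg K₁, NNReal.coe_nonneg K₂, hs.1]
    -- the squared difference
    set h : ℝ → ℝ := fun s => (u s) ^ 2 with hhdef
    have hLh : LipschitzOnWith (2 * M * ((K₁ : ℝ) + K₂)).toNNReal h (Set.Icc x c) := by
      apply LipschitzOnWith.of_dist_le_mul
      intro p hp q hq
      have h1 := hLu.dist_le_mul p hp q hq
      rw [Real.dist_eq] at h1 ⊢
      rw [Real.dist_eq]
      have : h p - h q = (u p + u q) * (u p - u q) := by rw [hhdef]; ring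
      rw [this, abs_mul]
      have hub : |u p + u q| ≤ 2 * M :=
        (abs_add_le _ _).trans (by linarith [hubound p hp, hubound q hq])
      have h2 : ((2 * M * ((K₁ : ℝ) + K₂)).toNNReal : ℝ) = 2 * M * ((K₁ : ℝ) + K₂) := by
        rw [Real.coe_toNNReal]
        positivity
      rw [h2]
      calc |u p + u q| * |u p - u q| ≤ (2 * M) * (((K₁ + K₂ : ℝ≥0) : ℝ) * |p - q|) := by
            apply mul_le_mul hub h1 (abs_nonneg _) (by positivity)
        _ = 2 * M * ((K₁ : ℝ) + K₂) * |p - q| := by push_cast; ring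
    have hdh : ∀ s ∈ Set.Ico x c, s ∉ N → ∃ d, d ≤ 0 ∧ HasDerivAt h d s := by
      intro s hs hsN
      have hPs : P s := not_not.1 hsN
      have hs0 : s ∈ Set.Ici (0:ℝ) := le_trans hx0 hs.1
      obtain ⟨z₁, hz₁, hder₁⟩ := hPs.1 hs0
      obtain ⟨z₂, hz₂, hder₂⟩ := hPs.2 hs0
      refine ⟨2 * u s ^ 1 * (z₁ - z₂), ?_, ?_⟩
      · have := hF (y₁ s) (y₂ s) z₁ z₂ hz₁ hz₂
        simp only [hu]
        nlinarith [this]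
      · have := (hder₁.sub hder₂).fun_pow 2
        simpa [hhdef, hu] using this
    have hkey := key hLh hN hdh c (Set.right_mem_Icc.2 hxc.le)
    have hhx : h x = 0 := by simp [hhdef, hu, hxS]
    have hhc : u c = 0 := by
      have h1 : h c ≤ 0 := hhx ▸ hkey
      have h2 : 0 ≤ h c := by rw [hhdef]; positivity
      have : u c ^ 2 = 0 := le_antisymm h1 h2
      exact pow_eq_zero_iff (by norm_num) |>.1 this
    refine ⟨c, ?_, hxc, hcy⟩
    simpa [hS, sub_eq_zero, hu] using hhc
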